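/- arXiv:2410.16339 — 2 statements merged into one kernel-verified Lean document; each statement's English description precedes it below -/
import Mathlib

section
/- Let μ, ν be probability measures on ℝ with finite first moments and let F(t) = ∫₀ᵗ (Q_μ(α) − Q_ν(α)) dα where Q_μ, Q_ν are the quantile functions. Then μ ≤_cx ν (μ is dominated by ν in convex order) if and only if F(t) ≥ 0 for all t ∈ [0,1] and F(1) = 0. -/
open MeasureTheory Set ProbabilityTheory Filter Topology

/-- The quantile (generalized inverse CDF) function of a measure on `ℝ`:
`Q_μ(α) = inf { x : μ((-∞, x]) ≥ α }`. -/
noncomputable def quantileFn (μ : Measure ℝ) (α : ℝ) : ℝ :=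
  sInf {x : ℝ | ENNReal.ofReal α ≤ μ (Iic x)}

namespace CxOrd

variable (μ : Measure ℝ) [IsProbabilityMeasure μ]

lemma qset_eq {α : ℝ} (hα : 0 ≤ α) :
    {x : ℝ | ENNReal.ofReal α ≤ μ (Iic x)} = {x | α ≤ cdf μ x} := by
  ext x
  simp only [mem_setOf_eq, ← ofReal_cdf μ x,
    ENNReal.ofReal_le_ofReal_iff (cdf_nonneg μ x)]

lemma qset_nonempty {α : ℝ} (hα : α < 1) : {x : ℝ | α ≤ cdf μ x}.Nonempty := by
  obtain ⟨x, hx⟩ := ((tendsto_cdf_atTop μ).eventually (eventually_ge_nhds hα)).exists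
  exact ⟨x, hx⟩

lemma qset_bddBelow {α : ℝ} (hα : 0 < α) : BddBelow {x : ℝ | α ≤ cdf μ x} := by
  obtain ⟨x₀, hx₀⟩ := ((tendsto_cdf_atBot μ).eventually (eventually_lt_nhds hα)).exists
  refine ⟨x₀, fun x hx => ?_⟩
  by_contra h
  push_neg at h
  exact absurd (le_trans hx (monotone_cdf μ h.le)) (not_le.2 hx₀)

lemma le_cdf_quantile {α : ℝ} (hα0 : 0 < α) (hα1 : α < 1) :
    α ≤ cdf μ (quantileFn μ α) := by
  rw [quantileFn, qset_eq μ hα0.le]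
  set S := {x | α ≤ cdf μ x} with hS
  have hne := qset_nonempty μ hα1
  have hbdd := qset_bddBelow μ hα0
  have key : ∀ y, sInf S < y → α ≤ cdf μ y := by
    intro y hy
    obtain ⟨z, hzS, hzy⟩ := (csInf_lt_iff hbdd hne).1 hy
    exact hzS.trans (monotone_cdf μ hzy.le)
  have hrc : Filter.Tendsto (cdf μ) (𝓝[>] (sInf S)) (𝓝 (cdf μ (sInf S))) := by
    have := (cdf μ).right_continuous (sInf S)
    exact this.tendsto.mono_left (nhdsWithin_mono _ Ioi_subset_Ici_self)
  refine ge_of_tendsto hrc ?_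
  filter_upwards [self_mem_nhdsWithin] with y hy
  exact key y hy

lemma quantile_le_iff {α x : ℝ} (hα0 : 0 < α) (hα1 : α < 1) :
    quantileFn μ α ≤ x ↔ α ≤ cdf μ x := by
  constructor
  · intro h
    exact (le_cdf_quantile μ hα0 hα1).trans (monotone_cdf μ h)
  · intro h
    rw [quantileFn, qset_eq μ hα0.le]
    exact csInf_le (qset_bddBelow μ hα0) h

lemma quantile_monotoneOn : MonotoneOn (quantileFn μ) (Ioo 0 1) := by
  intro α hα β hβ hab
  rw [quantile_le_iff μ hα.1 hα.2]
  exact hab.trans (le_cdf_quantile μ hβ.1 hβ.2)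

lemma quantile_aemeasurable :
    AEMeasurable (quantileFn μ) (volume.restrict (Ioo 0 1)) :=
  aemeasurable_restrict_of_monotoneOn measurableSet_Ioo (quantile_monotoneOn μ)

instance : IsProbabilityMeasure (volume.restrict (Ioo (0:ℝ) 1)) :=
  ⟨by simp [Real.volume_Ioo]⟩

lemma quantile_map_eq :
    (volume.restrict (Ioo (0:ℝ) 1)).map (quantileFn μ) = μ := by
  have hmeas := quantile_aemeasurable μ
  have : IsProbabilityMeasure ((volume.restrict (Ioo (0:ℝ) 1)).map (quantileFn μ)) :=
    Measure.isProbabilityMeasure_map hmeas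
  refine Measure.ext_of_Iic _ _ (fun x => ?_)
  rw [Measure.map_apply_of_aemeasurable hmeas measurableSet_Iic,
    Measure.restrict_apply' measurableSet_Ioo]
  have hset : quantileFn μ ⁻¹' (Iic x) ∩ Ioo 0 1 = Iic (cdf μ x) ∩ Ioo 0 1 := by
    ext α
    simp only [mem_inter_iff, mem_preimage, mem_Iic, mem_Ioo, and_congr_left_iff]
    intro hα
    exact quantile_le_iff μ hα.1 hα.2
  rw [hset, ← ofReal_cdf μ x]
  have h0 : (0:ℝ) ≤ cdf μ x := cdf_nonneg μ x
  have h1 : cdf μ x ≤ 1 := cdf_le_one μ x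
  rcases lt_or_eq_of_le h1 with h1' | h1'
  · have : Iic (cdf μ x) ∩ Ioo (0:ℝ) 1 = Ioc 0 (cdf μ x) := by
      ext α
      simp only [mem_inter_iff, mem_Iic, mem_Ioo, mem_Ioc]
      constructor
      · rintro ⟨h, h2, _⟩; exact ⟨h2, h⟩
      · rintro ⟨h2, h⟩; exact ⟨h, h2, lt_of_le_of_lt h h1'⟩
    rw [this, Real.volume_Ioc, sub_zero]
  · have : Iic (cdf μ x) ∩ Ioo (0:ℝ) 1 = Ioo 0 1 := by
      rw [← h1']
      ext α
      simp only [mem_inter_iff, mem_Iic, mem_Ioo]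
      exact ⟨fun h => h.2, fun h => ⟨h.2.le, h⟩⟩
    rw [this, Real.volume_Ioo, ← h1']
    norm_num

lemma integral_quantile_eq {g : ℝ → ℝ} (hg : Continuous g) :
    ∫ x, g x ∂μ = ∫ α in Ioo (0:ℝ) 1, g (quantileFn μ α) := by
  conv_lhs => rw [← quantile_map_eq μ]
  rw [integral_map (quantile_aemeasurable μ) hg.aestronglyMeasurable]

lemma integrable_quantile_iff {g : ℝ → ℝ} (hg : Continuous g) :
    Integrable g μ ↔ IntegrableOn (fun α => g (quantileFn μ α)) (Ioo (0:ℝ) 1) := by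
  have hg' : AEStronglyMeasurable g ((volume.restrict (Ioo (0:ℝ) 1)).map (quantileFn μ)) :=
    hg.aestronglyMeasurable
  have h := integrable_map_measure hg' (quantile_aemeasurable μ)
  rw [quantile_map_eq μ] at h
  rw [IntegrableOn, h]
  rfl

/-- Right derivative of a convex function, as an infimum of slopes. -/
noncomputable def rderiv (f : ℝ → ℝ) (x : ℝ) : ℝ :=
  sInf ((fun y => (f y - f x) / (y - x)) '' Ioi x)

lemma slope_mono {f : ℝ → ℝ} (hf : ConvexOn ℝ univ f) {x y z : ℝ} (hxy : x < y) (hyz : y < z) :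
    (f y - f x) / (y - x) ≤ (f z - f y) / (z - y) :=
  hf.slope_mono_adjacent (mem_univ x) (mem_univ z) hxy hyz

lemma rderiv_bddBelow {f : ℝ → ℝ} (hf : ConvexOn ℝ univ f) (x : ℝ) :
    BddBelow ((fun y => (f y - f x) / (y - x)) '' Ioi x) := by
  refine ⟨(f x - f (x - 1)) / (x - (x - 1)), ?_⟩
  rintro s ⟨y, hy, rfl⟩
  exact slope_mono hf (by linarith : x - 1 < x) hy

lemma rderiv_le_slope {f : ℝ → ℝ} (hf : ConvexOn ℝ univ f) {x y : ℝ} (hxy : x < y) :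
    rderiv f x ≤ (f y - f x) / (y - x) :=
  csInf_le (rderiv_bddBelow hf x) ⟨y, hxy, rfl⟩

lemma slope_le_rderiv {f : ℝ → ℝ} (hf : ConvexOn ℝ univ f) {x y : ℝ} (hyx : y < x) :
    (f x - f y) / (x - y) ≤ rderiv f x := by
  refine le_csInf (Set.Nonempty.image _ ⟨x + 1, by simp⟩) ?_
  rintro s ⟨z, hz, rfl⟩
  exact slope_mono hf hyx hz

lemma rderiv_subgradient {f : ℝ → ℝ} (hf : ConvexOn ℝ univ f) (x y : ℝ) :
    f x + rderiv f x * (y - x) ≤ f y := by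
  rcases lt_trichotomy x y with h | h | h
  · have h1 := rderiv_le_slope hf h
    have hpos : (0:ℝ) < y - x := by linarith
    rw [le_div_iff₀ hpos] at h1
    linarith
  · simp [h]
  · have h1 := slope_le_rderiv hf h
    have hpos : (0:ℝ) < x - y := by linarith
    rw [div_le_iff₀ hpos] at h1
    nlinarith
lemma rderiv_mono {f : ℝ → ℝ} (hf : ConvexOn ℝ univ f) : Monotone (rderiv f) := by
  intro x y hxy
  rcases eq_or_lt_of_le hxy with rfl | h
  · exact le_rfl
  refine (rderiv_le_slope hf h).trans ?_
  refine le_csInf (Set.Nonempty.image _ ⟨y + 1, by simp⟩) ?_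
  rintro s ⟨z, hz, rfl⟩
  exact slope_mono hf h hz

/-- Clamp to `[-A, A]`. -/
noncomputable def clampA (A x : ℝ) : ℝ := max (-A) (min x A)

/-- Truncation of a convex function: tangent-line extension outside `[-A,A]`. -/
noncomputable def trunc (f : ℝ → ℝ) (A x : ℝ) : ℝ :=
  f (clampA A x) + rderiv f (clampA A x) * (x - clampA A x)

lemma clampA_mem {A : ℝ} (hA : 0 ≤ A) (x : ℝ) : -A ≤ clampA A x ∧ clampA A x ≤ A :=
  ⟨le_max_left _ _, max_le (by linarith) (min_le_right _ _)⟩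

lemma clampA_monotone (A : ℝ) : Monotone (clampA A) := fun x y h =>
  max_le_max le_rfl (min_le_min h le_rfl)

lemma tangent_le_trunc {f : ℝ → ℝ} (hf : ConvexOn ℝ univ f) {A : ℝ} (hA : 0 ≤ A) {t : ℝ}
    (ht : -A ≤ t ∧ t ≤ A) (x : ℝ) :
    f t + rderiv f t * (x - t) ≤ trunc f A x := by
  rcases le_or_gt x (-A) with hx | hx
  · have hc : clampA A x = -A := by
      rw [clampA, max_eq_left]
      exact le_trans (min_le_left _ _) hx
    rw [trunc, hc]
    have h1 : f t + rderiv f t * (-A - t) ≤ f (-A) := rderiv_subgradient hf t (-A)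
    have h2 : rderiv f (-A) ≤ rderiv f t := rderiv_mono hf ht.1
    have hxA : x - -A ≤ 0 := by linarith
    nlinarith [mul_le_mul_of_nonpos_right h2 hxA]
  · rcases le_or_gt x A with hx2 | hx2
    · have hc : clampA A x = x := by
        rw [clampA, min_eq_left hx2, max_eq_right hx.le]
      rw [trunc, hc]
      simpa using rderiv_subgradient hf t x
    · have hc : clampA A x = A := by
        rw [clampA, min_eq_right hx2.le, max_eq_right (by linarith)]
      rw [trunc, hc]
      have h1 : f t + rderiv f t * (A - t) ≤ f A := rderiv_subgradient hf t A
      have h2 : rderiv f t ≤ rderiv f A := rderiv_mono hf ht.2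
      have hxA : 0 ≤ x - A := by linarith
      nlinarith [mul_le_mul_of_nonneg_right h2 hxA]

lemma trunc_le_self {f : ℝ → ℝ} (hf : ConvexOn ℝ univ f) (A x : ℝ) : trunc f A x ≤ f x := by
  simpa [trunc] using rderiv_subgradient hf (clampA A x) x

lemma trunc_mono_A {f : ℝ → ℝ} (hf : ConvexOn ℝ univ f) {A A' : ℝ} (hA : 0 ≤ A) (hAA' : A ≤ A')
    (x : ℝ) : trunc f A x ≤ trunc f A' x := by
  have hmem := clampA_mem hA x
  exact tangent_le_trunc hf (by linarith) ⟨by linarith [hmem.1], by linarith [hmem.2]⟩ x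

lemma trunc_eq_of_le {f : ℝ → ℝ} {A x : ℝ} (h1 : -A ≤ x) (h2 : x ≤ A) : trunc f A x = f x := by
  have hc : clampA A x = x := by rw [clampA, min_eq_left h2, max_eq_right h1]
  simp [trunc, hc]

lemma trunc_subgradient {f : ℝ → ℝ} (hf : ConvexOn ℝ univ f) {A : ℝ} (hA : 0 ≤ A) (x y : ℝ) :
    trunc f A x + rderiv f (clampA A x) * (y - x) ≤ trunc f A y := by
  have h := tangent_le_trunc hf (A := A) hA (t := clampA A x) (clampA_mem hA x) y
  calc trunc f A x + rderiv f (clampA A x) * (y - x)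
      = f (clampA A x) + rderiv f (clampA A x) * (y - clampA A x) := by rw [trunc]; ring
    _ ≤ trunc f A y := h

lemma rderiv_clampA_abs_le {f : ℝ → ℝ} (hf : ConvexOn ℝ univ f) {A : ℝ} (hA : 0 ≤ A) (x : ℝ) :
    |rderiv f (clampA A x)| ≤ max |rderiv f (-A)| |rderiv f A| := by
  have h1 : rderiv f (-A) ≤ rderiv f (clampA A x) := rderiv_mono hf (clampA_mem hA x).1
  have h2 : rderiv f (clampA A x) ≤ rderiv f A := rderiv_mono hf (clampA_mem hA x).2
  rw [abs_le]
  refine ⟨?_, h2.trans ((le_abs_self _).trans (le_max_right _ _))⟩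
  calc -(max |rderiv f (-A)| |rderiv f A|) ≤ -|rderiv f (-A)| := by
        simp only [neg_le_neg_iff]; exact le_max_left _ _
    _ ≤ rderiv f (-A) := neg_abs_le _
    _ ≤ _ := h1

lemma abel {S h : ℝ → ℝ} {C : ℝ}
    (hS : MonotoneOn S (Ioo 0 1))
    (hSm : AEMeasurable S (volume.restrict (Ioo (0:ℝ) 1)))
    (hC : ∀ α, |S α| ≤ C)
    (hh : IntegrableOn h (Ioo 0 1))
    (hH : ∀ t ∈ Icc (0:ℝ) 1, 0 ≤ ∫ α in Ioo t 1, h α)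
    (hH0 : (∫ α in Ioo (0:ℝ) 1, h α) = 0) :
    0 ≤ ∫ α in Ioo (0:ℝ) 1, S α * h α := by
  have hC0 : (0:ℝ) ≤ C := (abs_nonneg _).trans (hC 0)
  set IA := Ioo (0:ℝ) 1 with hIA
  set IL := Ioo (-C) C with hIL
  set Pα := volume.restrict IA with hPα
  set PL := volume.restrict IL with hPL
  haveI hPLfin : IsFiniteMeasure PL := by
    constructor
    rw [hPL, Measure.restrict_apply_univ]
    exact measure_Ioo_lt_top
  -- measurable representatives
  set S' := hSm.mk S with hS'
  have hS'm : Measurable S' := hSm.measurable_mk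
  have hSS' : S =ᵐ[Pα] S' := hSm.ae_eq_mk
  have hhm := hh.aestronglyMeasurable
  set h' := hhm.mk h with hh'
  have hh'm : StronglyMeasurable h' := hhm.stronglyMeasurable_mk
  have hhh' : h =ᵐ[Pα] h' := hhm.ae_eq_mk
  have hh'i : Integrable h' Pα := hh.congr hhh'
  -- the product function
  set G : ℝ × ℝ → ℝ := fun p => if p.2 < S' p.1 then h' p.1 else 0 with hG
  have hGmeas : AEStronglyMeasurable G (Pα.prod PL) := by
    have hset : MeasurableSet {p : ℝ × ℝ | p.2 < S' p.1} :=
      measurableSet_lt measurable_snd (hS'm.comp measurable_fst)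
    have : G = Set.indicator {p : ℝ × ℝ | p.2 < S' p.1} (fun p => h' p.1) := by
      funext p
      rw [Set.indicator_apply]
      rfl
    rw [this]
    exact ((hh'm.measurable.comp measurable_fst).indicator hset).aestronglyMeasurable
  -- integrability of G on the product
  have hdom : Integrable (fun p : ℝ × ℝ => |h' p.1|) (Pα.prod PL) := by
    have hmeas : AEStronglyMeasurable (fun p : ℝ × ℝ => |h' p.1|) (Pα.prod PL) :=
      ((hh'm.measurable.comp measurable_fst).abs).aestronglyMeasurable
    rw [integrable_prod_iff hmeas]
    refine ⟨Eventually.of_forall fun α => ?_, ?_⟩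
    · simpa using (integrable_const (|h' α|) : Integrable _ PL)
    · refine ((hh'i.norm.const_mul (PL univ).toReal).congr (Eventually.of_forall fun α => ?_))
      simp [integral_const, Real.norm_eq_abs, abs_abs, smul_eq_mul]
      exact Or.inl rfl
  have hGint : Integrable G (Pα.prod PL) := by
    refine Integrable.mono' hdom hGmeas (Eventually.of_forall fun p => ?_)
    rw [hG, Real.norm_eq_abs]
    dsimp only
    split_ifs
    · exact le_rfl
    · simp [abs_nonneg]
  -- swap
  have hswap := integral_integral_swap (f := fun α l => if l < S' α then h' α else 0)
    (μ := Pα) (ν := PL) hGint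
  -- evaluate the inner integral in λ for a.e. α
  have hinner : ∀ᵐ α ∂Pα, (∫ l, (if l < S' α then h' α else 0) ∂PL) = (S α + C) * h α := by
    filter_upwards [hSS', hhh'] with α hSα hhα
    have hb := hC α
    rw [abs_le] at hb
    have : (fun l => if l < S' α then h' α else 0)
        = Set.indicator (Iio (S' α)) (fun _ => h' α) := by
      funext l
      rw [Set.indicator_apply]
      rfl
    rw [this, hPL, integral_indicator measurableSet_Iio, Measure.restrict_restrict measurableSet_Iio]
    have hseteq : Iio (S' α) ∩ IL = Ioo (-C) (S' α) := by
      rw [← hSα, hIL]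
      ext l
      simp only [mem_inter_iff, mem_Iio, mem_Ioo]
      constructor
      · rintro ⟨h1, h2, _⟩; exact ⟨h2, h1⟩
      · rintro ⟨h2, h1⟩; exact ⟨h1, h2, lt_of_lt_of_le h1 hb.2⟩
    rw [hseteq, integral_const, measureReal_def, Measure.restrict_apply_univ, Real.volume_Ioo, smul_eq_mul, ← hSα, ← hhα,
      ENNReal.toReal_ofReal (by linarith : (0:ℝ) ≤ S α - -C)]
    ring
  -- the inner integral in α is nonnegative for every λ
  have houter : ∀ l : ℝ, 0 ≤ ∫ α, (if l < S' α then h' α else 0) ∂Pα := by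
    intro l
    set U : Set ℝ := {α ∈ IA | l < S α} with hU
    set u : ℝ := sInf (U ∪ {1}) with hu
    have hUsub : U ⊆ IA := fun α hα => hα.1
    have hbdd : BddBelow (U ∪ {1}) := by
      refine ⟨0, fun γ hγ => ?_⟩
      rcases hγ with hγ | hγ
      · exact (hUsub hγ).1.le
      · simp at hγ; rw [hγ]; norm_num
    have hne : (U ∪ {1}).Nonempty := ⟨1, Or.inr rfl⟩
    have hu0 : 0 ≤ u := le_csInf hne (by
      rintro γ (hγ | hγ)
      · exact (hUsub hγ).1.le
      · simp at hγ; rw [hγ]; norm_num)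
    have hu1 : u ≤ 1 := csInf_le hbdd (Or.inr rfl)
    have hup : ∀ α ∈ IA, u < α → l < S α := by
      intro α hα huα
      obtain ⟨γ, hγ, hγα⟩ := (csInf_lt_iff hbdd hne).1 huα
      rcases hγ with hγ | hγ
      · exact lt_of_lt_of_le hγ.2 (hS (hUsub hγ) hα hγα.le)
      · simp at hγ; rw [hγ] at hγα; exact absurd (hγα.trans hα.2) (lt_irrefl 1)
    have hsing : Pα {u} = 0 := by
      rw [hPα, Measure.restrict_apply' measurableSet_Ioo]
      exact measure_mono_null inter_subset_left (Real.volume_singleton)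
    have hne_ae : ∀ᵐ α ∂Pα, α ≠ u := by
      rw [ae_iff]
      refine measure_mono_null (fun α hα => ?_) hsing
      simpa using hα
    have hmem_ae : ∀ᵐ α ∂Pα, α ∈ IA := ae_restrict_mem measurableSet_Ioo
    have hcongr : (fun α => if l < S' α then h' α else 0)
        =ᵐ[Pα] Set.indicator (Ioi u) h := by
      filter_upwards [hSS', hhh', hne_ae, hmem_ae] with α hSα hhα hαu hαIA
      rw [Set.indicator_apply]
      simp only [mem_Ioi]
      rcases lt_trichotomy u α with hlt | heq | hgt
      · rw [if_pos hlt, ← hSα, ← hhα, if_pos (hup α hαIA hlt)]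
      · exact absurd heq.symm hαu
      · rw [if_neg (not_lt.2 hgt.le), ← hSα]
        rw [if_neg]
        intro hcon
        exact absurd (csInf_le hbdd (Or.inl ⟨hαIA, hcon⟩)) (not_le.2 hgt)
    rw [integral_congr_ae hcongr, hPα, integral_indicator measurableSet_Ioi,
      Measure.restrict_restrict measurableSet_Ioi]
    have : Ioi u ∩ IA = Ioo u 1 := by
      rw [hIA]
      ext α
      simp only [mem_inter_iff, mem_Ioi, mem_Ioo]
      exact ⟨fun ⟨h1, _, h3⟩ => ⟨h1, h3⟩, fun ⟨h1, h3⟩ => ⟨h1, lt_of_le_of_lt hu0 h1, h3⟩⟩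
    rw [this]
    exact hH u ⟨hu0, hu1⟩
  -- put everything together
  have hSh_int : Integrable (fun α => S α * h α) Pα := by
    refine Integrable.mono' (hh.norm.const_mul C) ((hSm.mul hh.aemeasurable).aestronglyMeasurable)
      (Eventually.of_forall fun α => ?_)
    rw [Real.norm_eq_abs, abs_mul]
    exact mul_le_mul_of_nonneg_right (hC α) (abs_nonneg _)
  have key : ∫ α, (S α + C) * h α ∂Pα = ∫ l, (∫ α, (if l < S' α then h' α else 0) ∂Pα) ∂PL := by
    rw [← hswap]
    exact (integral_congr_ae hinner).symm
  have hsplit : ∫ α, (S α + C) * h α ∂Pα = (∫ α, S α * h α ∂Pα) + C * ∫ α, h α ∂Pα := by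
    have : (fun α => (S α + C) * h α) = fun α => S α * h α + C * h α := by
      funext α; ring
    rw [this, integral_add hSh_int (hh.const_mul C), integral_const_mul]
  have hrhs : 0 ≤ ∫ l, (∫ α, (if l < S' α then h' α else 0) ∂Pα) ∂PL :=
    integral_nonneg fun l => houter l
  have : 0 ≤ (∫ α, S α * h α ∂Pα) + C * ∫ α, h α ∂Pα := by
    rw [← hsplit, key]; exact hrhs
  rw [hPα, hIA] at this
  rw [hH0, mul_zero, add_zero] at this
  exact this

lemma clampA_abs_le {A : ℝ} (hA : 0 ≤ A) (x : ℝ) : |clampA A x| ≤ A :=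
  abs_le.2 (clampA_mem hA x)

lemma core {q r f : ℝ → ℝ}
    (hq : MonotoneOn q (Ioo 0 1)) (hr : MonotoneOn r (Ioo 0 1))
    (hqi : IntegrableOn q (Ioo 0 1)) (hri : IntegrableOn r (Ioo 0 1))
    (hf : ConvexOn ℝ univ f)
    (hfq : IntegrableOn (fun α => f (q α)) (Ioo 0 1))
    (hfr : IntegrableOn (fun α => f (r α)) (Ioo 0 1))
    (hF : ∀ t ∈ Icc (0:ℝ) 1, 0 ≤ ∫ α in Ioo t 1, (r α - q α))
    (hF0 : (∫ α in Ioo (0:ℝ) 1, (r α - q α)) = 0) :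
    ∫ α in Ioo (0:ℝ) 1, f (q α) ≤ ∫ α in Ioo (0:ℝ) 1, f (r α) := by
  have hfc : Continuous f := by
    have := hf.continuousOn isOpen_univ
    exact continuousOn_univ.mp this
  set P := volume.restrict (Ioo (0:ℝ) 1) with hP
  haveI : IsFiniteMeasure P := by
    constructor
    rw [hP, Measure.restrict_apply_univ]
    exact measure_Ioo_lt_top
  have hqm : AEMeasurable q P := aemeasurable_restrict_of_monotoneOn measurableSet_Ioo hq
  have hrm : AEMeasurable r P := aemeasurable_restrict_of_monotoneOn measurableSet_Ioo hr
  -- truncation parameters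
  set A : ℕ → ℝ := fun n => (n : ℝ) + 1 with hAdef
  have hA0 : ∀ n, (0:ℝ) ≤ A n := fun n => by positivity
  set E : ℕ → ℝ := fun n => max |rderiv f (-(A n))| |rderiv f (A n)| with hEdef
  have hclamp_cont : ∀ n, Continuous (fun x => clampA (A n) x) := fun n =>
    continuous_const.max (continuous_id.min continuous_const)
  -- integrability of the truncations composed with a monotone integrable map
  have htrunc_int : ∀ (g : ℝ → ℝ), AEMeasurable g P → IntegrableOn g (Ioo 0 1) → ∀ n,
      Integrable (fun α => trunc f (A n) (g α)) P := by
    intro g hgm hgi n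
    obtain ⟨K, hK⟩ := (isCompact_Icc (a := -(A n)) (b := A n)).exists_bound_of_continuousOn
      hfc.continuousOn
    have hterm1 : Integrable (fun α => f (clampA (A n) (g α))) P := by
      refine Integrable.mono' (integrable_const K)
        (((hfc.comp (hclamp_cont n)).measurable).comp_aemeasurable hgm).aestronglyMeasurable
        (Eventually.of_forall fun α => ?_)
      exact hK _ (mem_Icc.2 (clampA_mem (hA0 n) (g α)))
    have hterm2 : Integrable (fun α => rderiv f (clampA (A n) (g α)) *
        (g α - clampA (A n) (g α))) P := by
      have hclm : AEMeasurable (fun α => clampA (A n) (g α)) P :=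
        ((hclamp_cont n).measurable.comp_aemeasurable hgm)
      refine Integrable.mono'
        (((hgi.abs.add (integrable_const (A n))).const_mul (E n)))
        (((rderiv_mono hf).measurable.comp_aemeasurable hclm).mul
          (hgm.sub hclm)).aestronglyMeasurable
        (Eventually.of_forall fun α => ?_)
      rw [Real.norm_eq_abs, abs_mul]
      have h1 : |rderiv f (clampA (A n) (g α))| ≤ E n := rderiv_clampA_abs_le hf (hA0 n) _
      have h2 : |g α - clampA (A n) (g α)| ≤ |g α| + A n := by
        calc |g α - clampA (A n) (g α)| ≤ |g α| + |clampA (A n) (g α)| := abs_sub _ _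
          _ ≤ |g α| + A n := by linarith [clampA_abs_le (hA0 n) (g α)]
      calc |rderiv f (clampA (A n) (g α))| * |g α - clampA (A n) (g α)|
          ≤ E n * (|g α| + A n) := by
            apply mul_le_mul h1 h2 (abs_nonneg _)
            exact (abs_nonneg _).trans h1
        _ = E n * (|g α| + A n) := rfl
    have : (fun α => trunc f (A n) (g α)) = fun α =>
        f (clampA (A n) (g α)) + rderiv f (clampA (A n) (g α)) * (g α - clampA (A n) (g α)) := by
      funext α; rfl
    rw [this]
    exact hterm1.add hterm2
  -- the key inequality for each n
  have hkey : ∀ n, (∫ α in Ioo (0:ℝ) 1, trunc f (A n) (q α))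
      ≤ ∫ α in Ioo (0:ℝ) 1, trunc f (A n) (r α) := by
    intro n
    set S : ℝ → ℝ := fun α => rderiv f (clampA (A n) (q α)) with hSdef
    have hSmono : MonotoneOn S (Ioo 0 1) := fun α hα β hβ hab =>
      rderiv_mono hf (clampA_monotone (A n) (hq hα hβ hab))
    have hSmeas : AEMeasurable S P :=
      (rderiv_mono hf).measurable.comp_aemeasurable
        ((hclamp_cont n).measurable.comp_aemeasurable hqm)
    have hSbd : ∀ α, |S α| ≤ E n := fun α => rderiv_clampA_abs_le hf (hA0 n) _
    have hh' : IntegrableOn (fun α => r α - q α) (Ioo (0:ℝ) 1) := hri.sub hqi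
    have habel := abel hSmono hSmeas hSbd hh' hF hF0
    have hSh_int : Integrable (fun α => S α * (r α - q α)) P := by
      refine Integrable.mono' ((hri.sub hqi).norm.const_mul (E n))
        (hSmeas.mul (hrm.sub hqm)).aestronglyMeasurable
        (Eventually.of_forall fun α => ?_)
      rw [Real.norm_eq_abs, abs_mul, Real.norm_eq_abs]
      exact mul_le_mul_of_nonneg_right (hSbd α) (abs_nonneg _)
    have hptwise : ∀ α, trunc f (A n) (q α) + S α * (r α - q α) ≤ trunc f (A n) (r α) :=
      fun α => trunc_subgradient hf (hA0 n) (q α) (r α)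
    have hql := htrunc_int q hqm hqi n
    have hrl := htrunc_int r hrm hri n
    have hsum : Integrable (fun α => trunc f (A n) (q α) + S α * (r α - q α)) P :=
      hql.add hSh_int
    have hmono := integral_mono hsum hrl hptwise
    rw [integral_add hql hSh_int] at hmono
    have : (∫ α, S α * (r α - q α) ∂P) ≥ 0 := habel
    calc (∫ α in Ioo (0:ℝ) 1, trunc f (A n) (q α))
        ≤ (∫ α in Ioo (0:ℝ) 1, trunc f (A n) (q α)) + ∫ α, S α * (r α - q α) ∂P := by linarith
      _ ≤ ∫ α in Ioo (0:ℝ) 1, trunc f (A n) (r α) := hmono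
  -- monotone convergence
  have hlim : ∀ (g : ℝ → ℝ), AEMeasurable g P → IntegrableOn g (Ioo 0 1) →
      IntegrableOn (fun α => f (g α)) (Ioo 0 1) →
      Tendsto (fun n => ∫ α in Ioo (0:ℝ) 1, trunc f (A n) (g α)) atTop
        (𝓝 (∫ α in Ioo (0:ℝ) 1, f (g α))) := by
    intro g hgm hgi hfg
    refine integral_tendsto_of_tendsto_of_monotone (fun n => htrunc_int g hgm hgi n) hfg
      (Eventually.of_forall fun α => ?_) (Eventually.of_forall fun α => ?_)
    · intro m n hmn
      exact trunc_mono_A hf (hA0 m) (by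
        rw [hAdef]
        simp only
        exact_mod_cast Nat.add_le_add_right hmn 1) (g α)
    · obtain ⟨N, hN⟩ := exists_nat_ge (|g α|)
      refine tendsto_atTop_of_eventually_const (i₀ := N) fun n hn => ?_
      have hAn : |g α| ≤ A n := by
        rw [hAdef]
        have : (N : ℝ) ≤ n := Nat.cast_le.2 hn
        simp only
        linarith
      rw [abs_le] at hAn
      exact trunc_eq_of_le hAn.1 hAn.2
  exact le_of_tendsto_of_tendsto' (hlim q hqm hqi hfq) (hlim r hrm hri hfr) hkey

/-- Splitting the unit-interval integral at `t`. -/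
lemma integral_split {g : ℝ → ℝ} (hg : IntegrableOn g (Ioo 0 1)) {t : ℝ}
    (ht : t ∈ Icc (0:ℝ) 1) :
    ∫ α in Ioo (0:ℝ) 1, g α = (∫ α in Ioc (0:ℝ) t, g α) + ∫ α in Ioo t 1, g α := by
  have hg1 : IntegrableOn g (Ioc 0 1) := (integrableOn_Ioc_iff_integrableOn_Ioo enorm_ne_top).2 hg
  have h1 : ∫ α in Ioo (0:ℝ) 1, g α = ∫ α in Ioc (0:ℝ) 1, g α :=
    (integral_Ioc_eq_integral_Ioo).symm
  rw [h1, ← Ioc_union_Ioc_eq_Ioc ht.1 ht.2,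
    setIntegral_union (Ioc_disjoint_Ioc_of_le le_rfl) measurableSet_Ioc
      (hg1.mono_set (Ioc_subset_Ioc le_rfl ht.2)) (hg1.mono_set (Ioc_subset_Ioc ht.1 le_rfl))]
  congr 1
  exact integral_Ioc_eq_integral_Ioo

lemma convexOn_affine (a b : ℝ) : ConvexOn ℝ univ (fun x : ℝ => a * x + b) := by
  refine ⟨convex_univ, fun x _ y _ c d hc hd hcd => ?_⟩
  simp only [smul_eq_mul]
  have : d = 1 - c := by linarith
  subst this
  ring_nf
  exact le_of_eq (by ring)

lemma convexOn_posPart (k : ℝ) : ConvexOn ℝ univ (fun x : ℝ => max (x - k) 0) := by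
  have h1 : ConvexOn ℝ univ (fun x : ℝ => x - k) := by
    have := convexOn_affine 1 (-k)
    simpa [one_mul, sub_eq_add_neg] using this
  have := h1.sup (convexOn_const 0 convex_univ)
  exact this

end CxOrd

open CxOrd in
/-- Let `μ, ν` be probability measures on `ℝ` with finite first moments and
`F(t) = ∫₀ᵗ (Q_μ(α) − Q_ν(α)) dα`.  Then `μ ≤_cx ν` (convex order: `∫ f dμ ≤ ∫ f dν`
for every convex `f` with both integrals defined) if and only if `F(t) ≥ 0` for all
`t ∈ [0,1]` and `F(1) = 0`. -/
theorem stmt6 (μ ν : Measure ℝ) [IsProbabilityMeasure μ] [IsProbabilityMeasure ν]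
    (hμ : Integrable (fun x => x) μ) (hν : Integrable (fun x => x) ν) :
    (∀ f : ℝ → ℝ, ConvexOn ℝ univ f → Integrable f μ → Integrable f ν →
        ∫ x, f x ∂μ ≤ ∫ x, f x ∂ν)
      ↔ ((∀ t ∈ Icc (0 : ℝ) 1,
            0 ≤ ∫ α in Ioc (0 : ℝ) t, (quantileFn μ α - quantileFn ν α)) ∧
          (∫ α in Ioc (0 : ℝ) 1, (quantileFn μ α - quantileFn ν α)) = 0) := by
  set Qμ := quantileFn μ with hQμdef
  set Qν := quantileFn ν with hQνdef
  have hQμi : IntegrableOn Qμ (Ioo 0 1) := (integrable_quantile_iff μ continuous_id).1 hμ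
  have hQνi : IntegrableOn Qν (Ioo 0 1) := (integrable_quantile_iff ν continuous_id).1 hν
  have hsub : IntegrableOn (fun α => Qμ α - Qν α) (Ioo 0 1) := hQμi.sub hQνi
  have hIμ : ∫ x, x ∂μ = ∫ α in Ioo (0:ℝ) 1, Qμ α := integral_quantile_eq μ continuous_id
  have hIν : ∫ x, x ∂ν = ∫ α in Ioo (0:ℝ) 1, Qν α := integral_quantile_eq ν continuous_id
  constructor
  · -- forward direction
    intro hcx
    -- equal means
    have hneg : ConvexOn ℝ univ (fun x : ℝ => -x) := by
      have := convexOn_affine (-1) 0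
      simpa using this
    have hid : ConvexOn ℝ univ (fun x : ℝ => x) := convexOn_id convex_univ
    have h1 := hcx _ hid hμ hν
    have h2 := hcx _ hneg hμ.neg hν.neg
    rw [integral_neg, integral_neg, neg_le_neg_iff] at h2
    have hmean : ∫ α in Ioo (0:ℝ) 1, Qμ α = ∫ α in Ioo (0:ℝ) 1, Qν α := by
      rw [← hIμ, ← hIν]
      exact le_antisymm h1 (h2.trans_eq rfl)
    have hF1 : (∫ α in Ioc (0:ℝ) 1, (Qμ α - Qν α)) = 0 := by
      rw [integral_Ioc_eq_integral_Ioo, integral_sub hQμi hQνi, hmean, sub_self]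
    refine ⟨?_, hF1⟩
    intro t ht
    rcases eq_or_lt_of_le ht.1 with rfl | ht0
    · simp
    rcases eq_or_lt_of_le ht.2 with rfl | ht1
    · rw [hF1]
    have htI : t ∈ Ioo (0:ℝ) 1 := ⟨ht0, ht1⟩
    set k := Qν t with hk
    set g : ℝ → ℝ := fun x => max (x - k) 0 with hgdef
    have hgcont : Continuous g := (continuous_id.sub continuous_const).max continuous_const
    have hgconv : ConvexOn ℝ univ g := convexOn_posPart k
    have hgμ : Integrable g μ := (hμ.sub (integrable_const k)).pos_part
    have hgν : Integrable g ν := (hν.sub (integrable_const k)).pos_part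
    have hgQμ : IntegrableOn (fun α => g (Qμ α)) (Ioo 0 1) :=
      (integrable_quantile_iff μ hgcont).1 hgμ
    have hgQν : IntegrableOn (fun α => g (Qν α)) (Ioo 0 1) :=
      (integrable_quantile_iff ν hgcont).1 hgν
    have hIoosub : Ioo t 1 ⊆ Ioo (0:ℝ) 1 := Ioo_subset_Ioo ht0.le le_rfl
    have hconst_t1 : IntegrableOn (fun _ : ℝ => k) (Ioo t 1) :=
      integrableOn_const measure_Ioo_lt_top.ne
    -- step 1
    have hstep1 : (∫ α in Ioo t 1, (Qμ α - k)) ≤ ∫ α in Ioo (0:ℝ) 1, g (Qμ α) := by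
      have ha : (∫ α in Ioo t 1, (Qμ α - k)) ≤ ∫ α in Ioo t 1, g (Qμ α) := by
        refine setIntegral_mono_on ((hQμi.mono_set hIoosub).sub hconst_t1)
          (hgQμ.mono_set hIoosub) measurableSet_Ioo (fun α _ => le_max_left _ _)
      refine ha.trans (setIntegral_mono_set hgQμ
        (Eventually.of_forall fun α => le_max_right _ _)
        (HasSubset.Subset.eventuallyLE hIoosub))
    -- step 2
    have hstep2 : (∫ α in Ioo (0:ℝ) 1, g (Qμ α)) ≤ ∫ α in Ioo (0:ℝ) 1, g (Qν α) := by
      rw [← integral_quantile_eq μ hgcont, ← integral_quantile_eq ν hgcont]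
      exact hcx g hgconv hgμ hgν
    -- step 3
    have hstep3 : (∫ α in Ioo (0:ℝ) 1, g (Qν α)) = ∫ α in Ioo t 1, (Qν α - k) := by
      rw [integral_split hgQν ht]
      have hz : (∫ α in Ioc (0:ℝ) t, g (Qν α)) = 0 := by
        rw [integral_Ioc_eq_integral_Ioo]
        rw [setIntegral_congr_fun measurableSet_Ioo (g := fun _ => (0:ℝ)) ?_, integral_zero]
        intro α hα
        have hαI : α ∈ Ioo (0:ℝ) 1 := ⟨hα.1, hα.2.trans ht1⟩
        have : Qν α ≤ k := quantile_monotoneOn ν hαI htI hα.2.le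
        simp only [hgdef]
        rw [max_eq_right (by linarith)]
      have he : (∫ α in Ioo t 1, g (Qν α)) = ∫ α in Ioo t 1, (Qν α - k) := by
        refine setIntegral_congr_fun measurableSet_Ioo (fun α hα => ?_)
        have hαI : α ∈ Ioo (0:ℝ) 1 := ⟨ht0.trans hα.1, hα.2⟩
        have : k ≤ Qν α := quantile_monotoneOn ν htI hαI hα.1.le
        simp only [hgdef]
        rw [max_eq_left (by linarith)]
      rw [hz, he, zero_add]
    -- step 4
    have hstep4 : (∫ α in Ioo t 1, (Qμ α - Qν α)) ≤ 0 := by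
      have h := (hstep1.trans hstep2).trans_eq hstep3
      rw [integral_sub (hQμi.mono_set hIoosub) hconst_t1,
        integral_sub (hQνi.mono_set hIoosub) hconst_t1] at h
      rw [integral_sub (hQμi.mono_set hIoosub) (hQνi.mono_set hIoosub)]
      linarith
    -- conclude
    have hsplit := integral_split hsub ht
    have htot : (∫ α in Ioo (0:ℝ) 1, (Qμ α - Qν α)) = 0 := by
      rw [← integral_Ioc_eq_integral_Ioo]
      exact hF1
    rw [htot] at hsplit
    linarith
  · -- backward direction
    rintro ⟨hF, hF1⟩
    intro f hfconv hfμ hfν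
    have hfc : Continuous f := by
      have := hfconv.continuousOn isOpen_univ
      exact continuousOn_univ.mp this
    rw [integral_quantile_eq μ hfc, integral_quantile_eq ν hfc]
    have htot : (∫ α in Ioo (0:ℝ) 1, (Qμ α - Qν α)) = 0 := by
      rw [← integral_Ioc_eq_integral_Ioo]; exact hF1
    have hswap : ∀ s : Set ℝ, (∫ α in s, (Qν α - Qμ α)) = - ∫ α in s, (Qμ α - Qν α) := by
      intro s
      rw [← integral_neg]
      exact integral_congr_ae (Eventually.of_forall fun α => by ring)
    refine core (quantile_monotoneOn μ) (quantile_monotoneOn ν) hQμi hQνi hfconv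
      ((integrable_quantile_iff μ hfc).1 hfμ) ((integrable_quantile_iff ν hfc).1 hfν)
      (fun t ht => ?_) ?_
    · have hsplit := integral_split hsub ht
      rw [htot] at hsplit
      rw [hswap]
      have := hF t ht
      linarith
    · rw [hswap, htot, neg_zero]
end

section
/- For any probability measures μ, ν on ℝ with finite second moments, the minimal value of E[(X−Y)²] over all couplings of (μ,ν) equals ∫₀¹ (Q_μ(α) − Q_ν(α))² dα, where Q_μ, Q_ν are the quantile functions (one-dimensional optimal transport with quadratic cost is achieved by the comonotone coupling). -/
open MeasureTheory Set

namespace OTAux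

open Filter

variable {μ : Measure ℝ} [IsProbabilityMeasure μ]

lemma right_cont {α x : ℝ} (h : ∀ y, x < y → ENNReal.ofReal α ≤ μ (Iic y)) :
    ENNReal.ofReal α ≤ μ (Iic x) := by
  have hIic : Iic x = ⋂ n : ℕ, Iic (x + 1/(n+1)) := by
    ext z
    simp only [mem_Iic, mem_iInter]
    constructor
    · intro hz n; have : (0:ℝ) < 1/(n+1) := by positivity
      linarith
    · intro hz
      by_contra hc
      push_neg at hc
      obtain ⟨n, hn⟩ := exists_nat_one_div_lt (sub_pos.2 hc)
      have := hz n
      linarith [hn]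
  have hanti : Antitone (fun n : ℕ => Iic (x + 1/(n+1))) := by
    intro a b hab
    apply Iic_subset_Iic.2
    have : (1:ℝ)/(b+1) ≤ 1/(a+1) := by
      apply one_div_le_one_div_of_le
      · positivity
      · have := (Nat.cast_le (α := ℝ)).2 hab
        linarith
    linarith
  rw [hIic, hanti.measure_iInter (fun n => measurableSet_Iic.nullMeasurableSet)
    ⟨0, measure_ne_top μ _⟩]
  refine le_iInf fun n => h _ ?_
  have : (0:ℝ) < 1/(n+1) := by positivity
  linarith

lemma S_nonempty {α : ℝ} (hα1 : α < 1) :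
    {x : ℝ | ENNReal.ofReal α ≤ μ (Iic x)}.Nonempty := by
  have huniv : (⋃ n : ℕ, Iic (n:ℝ)) = univ := by
    ext z; simp only [mem_iUnion, mem_Iic, mem_univ, iff_true]
    obtain ⟨n, hn⟩ := exists_nat_ge z; exact ⟨n, hn⟩
  have hmono : Monotone (fun n : ℕ => Iic (n:ℝ)) :=
    fun a b hab => Iic_subset_Iic.2 (by exact_mod_cast hab)
  have hlt : ENNReal.ofReal α < ⨆ n : ℕ, μ (Iic (n:ℝ)) := by
    rw [← hmono.measure_iUnion, huniv, measure_univ]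
    exact ENNReal.ofReal_lt_one.2 hα1
  obtain ⟨n, hn⟩ := lt_iSup_iff.1 hlt
  exact ⟨n, hn.le⟩

lemma S_bddBelow {α : ℝ} (hα : 0 < α) :
    BddBelow {x : ℝ | ENNReal.ofReal α ≤ μ (Iic x)} := by
  have hempty : (⋂ n : ℕ, Iic (-(n:ℝ))) = ∅ := by
    ext z; simp only [mem_iInter, mem_Iic, mem_empty_iff_false, iff_false]
    push_neg
    obtain ⟨n, hn⟩ := exists_nat_gt (-z)
    exact ⟨n, by linarith⟩
  have hanti : Antitone (fun n : ℕ => Iic (-(n:ℝ))) :=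
    fun a b hab => Iic_subset_Iic.2 (by simp only [neg_le_neg_iff]; exact_mod_cast hab)
  have h0 : (⨅ n : ℕ, μ (Iic (-(n:ℝ)))) = 0 := by
    rw [← hanti.measure_iInter (fun n => measurableSet_Iic.nullMeasurableSet)
      ⟨0, measure_ne_top μ _⟩, hempty, measure_empty]
  have hex : ∃ n : ℕ, μ (Iic (-(n:ℝ))) < ENNReal.ofReal α := by
    by_contra hc
    push_neg at hc
    have h1 := le_iInf hc
    rw [h0] at h1
    exact absurd (le_antisymm h1 zero_le).symm (ne_of_gt (ENNReal.ofReal_pos.2 hα)).symm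
  obtain ⟨n, hn⟩ := hex
  refine ⟨-(n:ℝ), fun z hz => ?_⟩
  by_contra hc
  push_neg at hc
  exact absurd (le_trans hz (measure_mono (Iic_subset_Iic.2 hc.le))) (not_le.2 hn)

lemma quantile_le_iff {α x : ℝ} (hα : 0 < α) (hα1 : α < 1) :
    quantileFn μ α ≤ x ↔ ENNReal.ofReal α ≤ μ (Iic x) := by
  constructor
  · intro h
    apply right_cont
    intro y hy
    have hlt : sInf {x : ℝ | ENNReal.ofReal α ≤ μ (Iic x)} < y := lt_of_le_of_lt h hy
    obtain ⟨z, hz, hzy⟩ := (csInf_lt_iff (S_bddBelow hα) (S_nonempty hα1)).1 hlt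
    exact le_trans hz (measure_mono (Iic_subset_Iic.2 hzy.le))
  · intro h
    exact csInf_le (S_bddBelow hα) h

/-- A measurable surrogate of the quantile function. -/
noncomputable def qm (μ : Measure ℝ) : ℝ → ℝ :=
  (Ioo (0:ℝ) 1).piecewise (quantileFn μ) (fun _ => quantileFn μ (1/2))

lemma preim_inter (x : ℝ) :
    {α : ℝ | quantileFn μ α ≤ x} ∩ Ioo 0 1 = Iic ((μ (Iic x)).toReal) ∩ Ioo 0 1 := by
  ext α
  simp only [mem_inter_iff, mem_setOf_eq, mem_Ioo, mem_Iic, and_congr_left_iff]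
  rintro ⟨h0, h1⟩
  rw [quantile_le_iff h0 h1, ENNReal.ofReal_le_iff_le_toReal (measure_ne_top μ _)]

lemma measurable_qm : Measurable (qm μ) := by
  apply measurable_of_Iic
  intro x
  have : qm μ ⁻¹' Iic x =
      ({α : ℝ | quantileFn μ α ≤ x} ∩ Ioo 0 1) ∪
        ((Ioo (0:ℝ) 1)ᶜ ∩ (if quantileFn μ (1/2) ≤ x then univ else ∅)) := by
    ext α
    by_cases hα : α ∈ Ioo (0:ℝ) 1
    · simp only [mem_preimage, mem_Iic, qm, piecewise_eq_of_mem _ _ _ hα, mem_union,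
        mem_inter_iff, mem_setOf_eq, mem_compl_iff, hα, not_true_eq_false, false_and, or_false,
        and_true]
    · simp only [mem_preimage, mem_Iic, qm, piecewise_eq_of_notMem _ _ _ hα, mem_union,
        mem_inter_iff, mem_setOf_eq, mem_compl_iff, hα, not_false_eq_true, true_and, and_false,
        false_or]
      rw [show (1:ℝ)/2 = 2⁻¹ by norm_num]
      split_ifs with h <;> simp [h]
  rw [this, preim_inter]
  refine ((measurableSet_Iic.inter measurableSet_Ioo)).union
    ((measurableSet_Ioo.compl).inter (by split_ifs <;> simp))

omit [IsProbabilityMeasure μ] in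
lemma qm_eq_ae : qm μ =ᵐ[volume.restrict (Ioo (0:ℝ) 1)] quantileFn μ := by
  rw [Filter.EventuallyEq, ae_restrict_iff' measurableSet_Ioo]
  exact Eventually.of_forall fun α hα => piecewise_eq_of_mem _ _ _ hα

lemma map_qm : (volume.restrict (Ioo (0:ℝ) 1)).map (qm μ) = μ := by
  apply Measure.ext_of_Iic _ μ
  intro x
  rw [Measure.map_apply measurable_qm measurableSet_Iic]
  have h1 : qm μ ⁻¹' Iic x ∩ Ioo 0 1 = Iic ((μ (Iic x)).toReal) ∩ Ioo 0 1 := by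
    rw [← preim_inter]
    ext α
    simp only [mem_inter_iff, mem_preimage, mem_Iic, mem_setOf_eq, and_congr_left_iff]
    intro hα
    rw [qm, piecewise_eq_of_mem _ _ _ hα]
  rw [Measure.restrict_apply (measurable_qm measurableSet_Iic), h1]
  set c := (μ (Iic x)).toReal with hc
  have hc0 : 0 ≤ c := ENNReal.toReal_nonneg
  have hc1 : c ≤ 1 := by
    rw [hc]
    exact ENNReal.toReal_le_of_le_ofReal zero_le_one (by simpa using prob_le_one)
  have hvol : volume (Iic c ∩ Ioo (0:ℝ) 1) = ENNReal.ofReal c := by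
    apply le_antisymm
    · calc volume (Iic c ∩ Ioo (0:ℝ) 1) ≤ volume (Ioc 0 c) := by
            apply measure_mono
            rintro α ⟨h1, h2, h3⟩
            exact ⟨h2, h1⟩
          _ = ENNReal.ofReal c := by rw [Real.volume_Ioc, sub_zero]
    · calc ENNReal.ofReal c = volume (Ioo 0 c) := by rw [Real.volume_Ioo, sub_zero]
          _ ≤ volume (Iic c ∩ Ioo (0:ℝ) 1) := by
            apply measure_mono
            rintro α ⟨h1, h2⟩
            exact ⟨h2.le, h1, lt_of_lt_of_le h2 hc1⟩
  rw [hvol, hc, ENNReal.ofReal_toReal (measure_ne_top μ _)]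

lemma qm_gt_iff {α s : ℝ} (hα : α ∈ Ioo (0:ℝ) 1) :
    s < qm μ α ↔ (μ (Iic s)).toReal < α := by
  rw [qm, piecewise_eq_of_mem _ _ _ hα, ← not_le, ← not_le,
    quantile_le_iff hα.1 hα.2, ENNReal.ofReal_le_iff_le_toReal (measure_ne_top μ _)]

lemma toReal_Ioi (s : ℝ) :
    (μ (Ioi s)).toReal = 1 - (μ (Iic s)).toReal := by
  rw [← compl_Iic, measure_compl measurableSet_Iic (measure_ne_top μ _), measure_univ,
    ENNReal.toReal_sub_of_le prob_le_one (by norm_num), ENNReal.toReal_one]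

lemma comon_surv (μ ν : Measure ℝ) [IsProbabilityMeasure μ] [IsProbabilityMeasure ν] (s t : ℝ) :
    (volume.restrict (Ioo (0:ℝ) 1)) {α | s < qm μ α ∧ t < qm ν α}
      = min (μ (Ioi s)) (ν (Ioi t)) := by
  have hms : MeasurableSet {α : ℝ | s < qm μ α ∧ t < qm ν α} :=
    (measurableSet_lt measurable_const measurable_qm).inter
      (measurableSet_lt measurable_const measurable_qm)
  rw [Measure.restrict_apply hms]
  set a := (μ (Iic s)).toReal with ha
  set b := (ν (Iic t)).toReal with hb
  have ha0 : 0 ≤ a := ENNReal.toReal_nonneg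
  have hb0 : 0 ≤ b := ENNReal.toReal_nonneg
  have ha1 : a ≤ 1 := by
    rw [ha]; exact ENNReal.toReal_le_of_le_ofReal zero_le_one (by simpa using prob_le_one)
  have hb1 : b ≤ 1 := by
    rw [hb]; exact ENNReal.toReal_le_of_le_ofReal zero_le_one (by simpa using prob_le_one)
  have hset : {α : ℝ | s < qm μ α ∧ t < qm ν α} ∩ Ioo 0 1 = Ioo (max a b) 1 := by
    ext α
    simp only [mem_inter_iff, mem_setOf_eq, mem_Ioo, max_lt_iff]
    constructor
    · rintro ⟨⟨h1, h2⟩, h3, h4⟩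
      exact ⟨⟨(qm_gt_iff ⟨h3, h4⟩).1 h1, (qm_gt_iff ⟨h3, h4⟩).1 h2⟩, h4⟩
    · rintro ⟨⟨h1, h2⟩, h4⟩
      have h3 : 0 < α := lt_of_le_of_lt ha0 h1
      exact ⟨⟨(qm_gt_iff ⟨h3, h4⟩).2 h1, (qm_gt_iff ⟨h3, h4⟩).2 h2⟩, h3, h4⟩
  rw [hset, Real.volume_Ioo]
  have hμs : μ (Ioi s) = ENNReal.ofReal (1 - a) := by
    rw [← ENNReal.ofReal_toReal (measure_ne_top μ (Ioi s)), toReal_Ioi]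
  have hνt : ν (Ioi t) = ENNReal.ofReal (1 - b) := by
    rw [← ENNReal.ofReal_toReal (measure_ne_top ν (Ioi t)), toReal_Ioi]
  rw [hμs, hνt]
  rcases le_total a b with hab | hab
  · rw [max_eq_right hab, min_eq_right (ENNReal.ofReal_le_ofReal (by linarith))]
  · rw [max_eq_left hab, min_eq_left (ENNReal.ofReal_le_ofReal (by linarith))]

/-! ### Hoeffding's representation -/

/-- The kernel in Hoeffding's covariance representation. -/
noncomputable def ff (s x : ℝ) : ℝ := (if s < x then 1 else 0) - (if s < 0 then 1 else 0)

lemma ff_eq (x : ℝ) : (fun s => ff s x) =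
    fun s => (Ico (0:ℝ) x).indicator 1 s - (Ico x 0).indicator 1 s := by
  funext s
  simp only [ff, indicator, mem_Ico, Pi.one_apply]
  rcases lt_or_ge s x with h1 | h1 <;> rcases lt_or_ge s 0 with h2 | h2 <;>
    simp [h1, h2, not_lt.2, le_of_lt] <;> split_ifs <;> norm_num <;> linarith

lemma ind_int (a b : ℝ) : Integrable ((Ico a b).indicator (1 : ℝ → ℝ)) volume :=
  (integrable_indicator_iff measurableSet_Ico).2 (integrableOn_const (μ := volume) (s := Ico a b) (C := (1:ℝ))
    (by rw [Real.volume_Ico]; exact ENNReal.ofReal_ne_top))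

lemma ind_integral (a b : ℝ) : ∫ s, (Ico a b).indicator (1 : ℝ → ℝ) s = max (b - a) 0 := by
  rw [integral_indicator_one measurableSet_Ico, measureReal_def, Real.volume_Ico, ENNReal.toReal_ofReal']

lemma ff_integrable (x : ℝ) : Integrable (fun s => ff s x) volume := by
  rw [ff_eq]
  exact (ind_int 0 x).sub (ind_int x 0)

lemma ff_integral (x : ℝ) : ∫ s, ff s x = x := by
  rw [ff_eq, integral_sub (ind_int 0 x) (ind_int x 0), ind_integral, ind_integral]
  rcases le_total 0 x with h | h
  · rw [max_eq_left (by linarith), max_eq_right (by linarith)]; ring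
  · rw [max_eq_right (by linarith), max_eq_left (by linarith)]; ring

lemma ff_abs_eq (x : ℝ) : (fun s => |ff s x|) =
    fun s => (Ico (0:ℝ) x).indicator 1 s + (Ico x 0).indicator 1 s := by
  have h := ff_eq x
  funext s
  have hs : ff s x = (Ico (0:ℝ) x).indicator 1 s - (Ico x 0).indicator 1 s := congrFun h s
  rcases le_total 0 x with hx | hx
  · have h2 : (Ico x 0).indicator (1 : ℝ → ℝ) s = 0 := by
      apply indicator_of_notMem
      simp only [mem_Ico, not_and, not_lt]
      intro h3; linarith
    rw [hs, h2, sub_zero, add_zero, abs_of_nonneg (indicator_nonneg (by norm_num) s)]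
  · have h2 : (Ico (0:ℝ) x).indicator (1 : ℝ → ℝ) s = 0 := by
      apply indicator_of_notMem
      simp only [mem_Ico, not_and, not_lt]
      intro h3; linarith
    rw [hs, h2, zero_sub, zero_add, abs_neg, abs_of_nonneg (indicator_nonneg (by norm_num) s)]

lemma ff_abs_integral (x : ℝ) : ∫ s, |ff s x| = |x| := by
  rw [ff_abs_eq, integral_add (ind_int 0 x) (ind_int x 0), ind_integral, ind_integral]
  rcases le_total 0 x with h | h
  · rw [max_eq_left (by linarith), max_eq_right (by linarith), abs_of_nonneg h]; ring
  · rw [max_eq_right (by linarith), max_eq_left (by linarith), abs_of_nonpos h]; ring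

lemma ff_meas_aux : Measurable (fun q : (ℝ × ℝ) × ℝ × ℝ => ff q.2.1 q.1.1 * ff q.2.2 q.1.2) := by
  apply Measurable.mul
  · apply Measurable.sub
    · exact Measurable.ite (measurableSet_lt measurable_snd.fst measurable_fst.fst)
        measurable_const measurable_const
    · exact Measurable.ite (measurableSet_lt measurable_snd.fst measurable_const)
        measurable_const measurable_const
  · apply Measurable.sub
    · exact Measurable.ite (measurableSet_lt measurable_snd.snd measurable_fst.snd)
        measurable_const measurable_const
    · exact Measurable.ite (measurableSet_lt measurable_snd.snd measurable_const)
        measurable_const measurable_const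

lemma uncurry_integrable (π : Measure (ℝ × ℝ)) [IsProbabilityMeasure π]
    (habs : Integrable (fun p : ℝ × ℝ => p.1 * p.2) π) :
    Integrable (Function.uncurry fun (p st : ℝ × ℝ) => ff st.1 p.1 * ff st.2 p.2)
      (π.prod (volume.prod volume)) := by
  have hmeas : AEStronglyMeasurable
      (Function.uncurry fun (p st : ℝ × ℝ) => ff st.1 p.1 * ff st.2 p.2)
      (π.prod (volume.prod volume)) := ff_meas_aux.aestronglyMeasurable
  rw [integrable_prod_iff hmeas]
  constructor
  · refine Eventually.of_forall fun p => ?_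
    exact Integrable.mul_prod (ff_integrable p.1) (ff_integrable p.2)
  · apply Integrable.congr habs.abs
    refine Eventually.of_forall fun p => ?_
    simp only [Function.uncurry_apply_pair]
    have h2 : (fun st : ℝ × ℝ => ‖ff st.1 p.1 * ff st.2 p.2‖)
        = fun st : ℝ × ℝ => |ff st.1 p.1| * |ff st.2 p.2| := by
      funext st; rw [Real.norm_eq_abs, abs_mul]
    rw [h2, integral_prod_mul (L := ℝ) (fun s => |ff s p.1|) (fun t => |ff t p.2|),
      ff_abs_integral, ff_abs_integral, abs_mul]

lemma hoeffding_eq (π : Measure (ℝ × ℝ)) [IsProbabilityMeasure π]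
    (habs : Integrable (fun p : ℝ × ℝ => p.1 * p.2) π) :
    ∫ p, p.1 * p.2 ∂π
      = ∫ st : ℝ × ℝ, (∫ p, ff st.1 p.1 * ff st.2 p.2 ∂π) ∂(volume.prod volume) := by
  have h1 : ∀ p : ℝ × ℝ, (∫ st : ℝ × ℝ, ff st.1 p.1 * ff st.2 p.2 ∂(volume.prod volume))
      = p.1 * p.2 := by
    intro p
    rw [integral_prod_mul (L := ℝ) (fun s => ff s p.1) (fun t => ff t p.2),
      ff_integral, ff_integral]
  rw [← integral_integral_swap (uncurry_integrable π habs)]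
  simp_rw [h1]

lemma hoeffding_integrable (π : Measure (ℝ × ℝ)) [IsProbabilityMeasure π]
    (habs : Integrable (fun p : ℝ × ℝ => p.1 * p.2) π) :
    Integrable (fun st : ℝ × ℝ => ∫ p, ff st.1 p.1 * ff st.2 p.2 ∂π)
      (volume.prod volume) :=
  (uncurry_integrable π habs).integral_prod_right

lemma ind_int_prob {π : Measure (ℝ × ℝ)} [IsProbabilityMeasure π] {A : Set (ℝ × ℝ)}
    (hA : MeasurableSet A) : Integrable (A.indicator (1 : ℝ × ℝ → ℝ)) π :=
  (integrable_indicator_iff hA).2 (integrableOn_const (C := (1:ℝ)) (measure_ne_top _ _))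

lemma inner_eval (π : Measure (ℝ × ℝ)) [IsProbabilityMeasure π] (st : ℝ × ℝ) :
    ∫ p, ff st.1 p.1 * ff st.2 p.2 ∂π
      = (π {p : ℝ × ℝ | st.1 < p.1 ∧ st.2 < p.2}).toReal
        - (if st.2 < 0 then (1:ℝ) else 0) * (π {p : ℝ × ℝ | st.1 < p.1}).toReal
        - (if st.1 < 0 then (1:ℝ) else 0) * (π {p : ℝ × ℝ | st.2 < p.2}).toReal
        + (if st.1 < 0 then (1:ℝ) else 0) * (if st.2 < 0 then (1:ℝ) else 0) := by
  set A : Set (ℝ × ℝ) := {p | st.1 < p.1} with hA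
  set B : Set (ℝ × ℝ) := {p | st.2 < p.2} with hB
  have hAm : MeasurableSet A := measurableSet_lt measurable_const measurable_fst
  have hBm : MeasurableSet B := measurableSet_lt measurable_const measurable_snd
  set c : ℝ := if st.1 < 0 then 1 else 0 with hc
  set d : ℝ := if st.2 < 0 then 1 else 0 with hd
  have hfun : (fun p => ff st.1 p.1 * ff st.2 p.2)
      = fun p => (A ∩ B).indicator (1 : ℝ × ℝ → ℝ) p - d * A.indicator 1 p
          - c * B.indicator 1 p + c * d := by
    funext p
    have hAi : A.indicator (1 : ℝ × ℝ → ℝ) p = if st.1 < p.1 then 1 else 0 := by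
      by_cases h : st.1 < p.1 <;> simp [hA, indicator, mem_setOf_eq, h]
    have hBi : B.indicator (1 : ℝ × ℝ → ℝ) p = if st.2 < p.2 then 1 else 0 := by
      by_cases h : st.2 < p.2 <;> simp [hB, indicator, mem_setOf_eq, h]
    have hABi : (A ∩ B).indicator (1 : ℝ × ℝ → ℝ) p
        = (if st.1 < p.1 then (1:ℝ) else 0) * (if st.2 < p.2 then (1:ℝ) else 0) := by
      by_cases h1 : st.1 < p.1 <;> by_cases h2 : st.2 < p.2 <;>
        simp [hA, hB, indicator, mem_inter_iff, mem_setOf_eq, h1, h2]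
    simp only [ff]
    rw [hAi, hBi, hABi, hc, hd]
    ring
  rw [hfun]
  have i3 : Integrable (fun p => (A ∩ B).indicator (1 : ℝ × ℝ → ℝ) p
      - d * A.indicator 1 p - c * B.indicator 1 p) π :=
    ((ind_int_prob (hAm.inter hBm)).sub ((ind_int_prob hAm).const_mul d)).sub
      ((ind_int_prob hBm).const_mul c)
  have i2 : Integrable (fun p => (A ∩ B).indicator (1 : ℝ × ℝ → ℝ) p
      - d * A.indicator 1 p) π :=
    (ind_int_prob (hAm.inter hBm)).sub ((ind_int_prob hAm).const_mul d)
  rw [integral_add i3 (integrable_const (c * d)),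
    integral_sub i2 ((ind_int_prob hBm).const_mul c),
    integral_sub (ind_int_prob (hAm.inter hBm)) ((ind_int_prob hAm).const_mul d),
    integral_indicator_one (hAm.inter hBm), integral_const_mul, integral_const_mul,
    integral_indicator_one hAm, integral_indicator_one hBm, integral_const, probReal_univ]
  have hS : A ∩ B = {p : ℝ × ℝ | st.1 < p.1 ∧ st.2 < p.2} := rfl
  rw [hS]
  simp [measureReal_def]

lemma inner_mono {μ ν : Measure ℝ} (π π' : Measure (ℝ × ℝ)) [IsProbabilityMeasure π]
    [IsProbabilityMeasure π']
    (h1 : π.map Prod.fst = μ) (h2 : π.map Prod.snd = ν)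
    (h1' : π'.map Prod.fst = μ) (h2' : π'.map Prod.snd = ν)
    (st : ℝ × ℝ)
    (hS : π {p : ℝ × ℝ | st.1 < p.1 ∧ st.2 < p.2}
        ≤ π' {p : ℝ × ℝ | st.1 < p.1 ∧ st.2 < p.2}) :
    ∫ p, ff st.1 p.1 * ff st.2 p.2 ∂π ≤ ∫ p, ff st.1 p.1 * ff st.2 p.2 ∂π' := by
  have hfst : π {p : ℝ × ℝ | st.1 < p.1} = π' {p : ℝ × ℝ | st.1 < p.1} := by
    have e1 : {p : ℝ × ℝ | st.1 < p.1} = Prod.fst ⁻¹' Ioi st.1 := rfl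
    rw [e1, ← Measure.map_apply measurable_fst measurableSet_Ioi,
      ← Measure.map_apply measurable_fst measurableSet_Ioi, h1, h1']
  have hsnd : π {p : ℝ × ℝ | st.2 < p.2} = π' {p : ℝ × ℝ | st.2 < p.2} := by
    have e1 : {p : ℝ × ℝ | st.2 < p.2} = Prod.snd ⁻¹' Ioi st.2 := rfl
    rw [e1, ← Measure.map_apply measurable_snd measurableSet_Ioi,
      ← Measure.map_apply measurable_snd measurableSet_Ioi, h2, h2']
  rw [inner_eval, inner_eval, hfst, hsnd]
  have hSr : (π {p : ℝ × ℝ | st.1 < p.1 ∧ st.2 < p.2}).toReal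
      ≤ (π' {p : ℝ × ℝ | st.1 < p.1 ∧ st.2 < p.2}).toReal :=
    ENNReal.toReal_le_toReal (measure_ne_top _ _) (measure_ne_top _ _) |>.2 hS
  have hc : (0:ℝ) ≤ if st.1 < 0 then (1:ℝ) else 0 := by split_ifs <;> norm_num
  have hd : (0:ℝ) ≤ if st.2 < 0 then (1:ℝ) else 0 := by split_ifs <;> norm_num
  linarith

lemma coupling_int {μ ν : Measure ℝ} [IsProbabilityMeasure μ] [IsProbabilityMeasure ν]
    (hμ : MemLp (fun x => x) 2 μ) (hν : MemLp (fun x => x) 2 ν)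
    (π : Measure (ℝ × ℝ)) [IsProbabilityMeasure π]
    (hfst : π.map Prod.fst = μ) (hsnd : π.map Prod.snd = ν) :
    Integrable (fun p : ℝ × ℝ => p.1 * p.2) π ∧
      ∫ p, (p.1 - p.2) ^ 2 ∂π
        = (∫ x, x ^ 2 ∂μ) + (∫ x, x ^ 2 ∂ν) - 2 * ∫ p, p.1 * p.2 ∂π := by
  have aesm1 : AEStronglyMeasurable (fun x : ℝ => x ^ 2) (π.map Prod.fst) :=
    (measurable_id.pow_const 2).aestronglyMeasurable
  have aesm2 : AEStronglyMeasurable (fun x : ℝ => x ^ 2) (π.map Prod.snd) :=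
    (measurable_id.pow_const 2).aestronglyMeasurable
  have h1 : Integrable (fun x : ℝ => x ^ 2) (π.map Prod.fst) := by
    rw [hfst]; exact hμ.integrable_sq
  have h2 : Integrable (fun x : ℝ => x ^ 2) (π.map Prod.snd) := by
    rw [hsnd]; exact hν.integrable_sq
  have isq1 : Integrable (fun p : ℝ × ℝ => p.1 ^ 2) π := by
    have := (integrable_map_measure aesm1 measurable_fst.aemeasurable).1 h1
    simpa [Function.comp_def] using this
  have isq2 : Integrable (fun p : ℝ × ℝ => p.2 ^ 2) π := by
    have := (integrable_map_measure aesm2 measurable_snd.aemeasurable).1 h2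
    simpa [Function.comp_def] using this
  have imul : Integrable (fun p : ℝ × ℝ => p.1 * p.2) π := by
    refine Integrable.mono' (isq1.add isq2)
      ((measurable_fst.mul measurable_snd).aestronglyMeasurable)
      (Eventually.of_forall fun p => ?_)
    simp only [Pi.add_apply]
    rw [Real.norm_eq_abs, abs_mul]
    nlinarith [sq_nonneg (|p.1| - |p.2|), abs_nonneg p.1, abs_nonneg p.2,
      sq_abs p.1, sq_abs p.2, mul_nonneg (abs_nonneg p.1) (abs_nonneg p.2)]
  refine ⟨imul, ?_⟩
  have hfe : (fun p : ℝ × ℝ => (p.1 - p.2) ^ 2)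
      = fun p : ℝ × ℝ => (p.1 ^ 2 - 2 * (p.1 * p.2)) + p.2 ^ 2 := by
    funext p; ring
  have e1 : ∫ x, x ^ 2 ∂μ = ∫ p : ℝ × ℝ, p.1 ^ 2 ∂π := by
    rw [← hfst, integral_map measurable_fst.aemeasurable aesm1]
  have e2 : ∫ x, x ^ 2 ∂ν = ∫ p : ℝ × ℝ, p.2 ^ 2 ∂π := by
    rw [← hsnd, integral_map measurable_snd.aemeasurable aesm2]
  have i12 : Integrable (fun p : ℝ × ℝ => p.1 ^ 2 - 2 * (p.1 * p.2)) π :=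
    isq1.sub (imul.const_mul 2)
  rw [hfe, integral_add i12 isq2,
    integral_sub isq1 (imul.const_mul 2), integral_const_mul, e1, e2]
  ring

end OTAux

open OTAux

/-- For probability measures `μ, ν` on `ℝ` with finite second moments, the minimal
value of `E[(X − Y)²]` over all couplings of `(μ, ν)` exists and equals
`∫₀¹ (Q_μ(α) − Q_ν(α))² dα` (one-dimensional optimal transport with quadratic cost,
achieved by the comonotone coupling). -/
theorem stmt12 (μ ν : Measure ℝ) [IsProbabilityMeasure μ] [IsProbabilityMeasure ν]
    (hμ : MemLp (fun x => x) 2 μ) (hν : MemLp (fun x => x) 2 ν) :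
    IsLeast
      {c : ℝ | ∃ π : Measure (ℝ × ℝ), IsProbabilityMeasure π ∧
        π.map Prod.fst = μ ∧ π.map Prod.snd = ν ∧
        c = ∫ p : ℝ × ℝ, (p.1 - p.2) ^ 2 ∂π}
      (∫ α in Ioc (0 : ℝ) 1, (quantileFn μ α - quantileFn ν α) ^ 2) := by
  haveI hPlam : IsProbabilityMeasure (volume.restrict (Ioo (0:ℝ) 1)) :=
    ⟨by simp [Real.volume_Ioo]⟩
  set T : ℝ → ℝ × ℝ := fun α => (qm μ α, qm ν α) with hTdef
  have hT : Measurable T := measurable_qm.prodMk measurable_qm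
  set π₀ : Measure (ℝ × ℝ) := (volume.restrict (Ioo (0:ℝ) 1)).map T with hπ₀def
  haveI hPπ₀ : IsProbabilityMeasure π₀ := Measure.isProbabilityMeasure_map hT.aemeasurable
  have hfst₀ : π₀.map Prod.fst = μ := by
    rw [hπ₀def, Measure.map_map measurable_fst hT]
    have : Prod.fst ∘ T = qm μ := rfl
    rw [this, map_qm]
  have hsnd₀ : π₀.map Prod.snd = ν := by
    rw [hπ₀def, Measure.map_map measurable_snd hT]
    have : Prod.snd ∘ T = qm ν := rfl
    rw [this, map_qm]
  obtain ⟨imul₀, hcost₀⟩ := coupling_int hμ hν π₀ hfst₀ hsnd₀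
  -- the cost of the comonotone coupling equals the quantile integral
  have hcostval : ∫ p : ℝ × ℝ, (p.1 - p.2) ^ 2 ∂π₀
      = ∫ α in Ioc (0 : ℝ) 1, (quantileFn μ α - quantileFn ν α) ^ 2 := by
    have aesm : AEStronglyMeasurable (fun p : ℝ × ℝ => (p.1 - p.2) ^ 2) π₀ :=
      ((measurable_fst.sub measurable_snd).pow_const 2).aestronglyMeasurable
    rw [hπ₀def] at aesm ⊢
    rw [integral_map hT.aemeasurable aesm]
    rw [integral_Ioc_eq_integral_Ioo]
    apply integral_congr_ae
    filter_upwards [qm_eq_ae (μ := μ), qm_eq_ae (μ := ν)] with α h1 h2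
    simp only [hTdef, h1, h2]
  constructor
  · exact ⟨π₀, hPπ₀, hfst₀, hsnd₀, hcostval.symm⟩
  · rintro c ⟨π, hPπ, hfst, hsnd, rfl⟩
    obtain ⟨imul, hcost⟩ := coupling_int hμ hν π hfst hsnd
    -- survival function comparison
    have hcomp : ∀ st : ℝ × ℝ, π {p : ℝ × ℝ | st.1 < p.1 ∧ st.2 < p.2}
        ≤ π₀ {p : ℝ × ℝ | st.1 < p.1 ∧ st.2 < p.2} := by
      intro st
      have hSm : MeasurableSet {p : ℝ × ℝ | st.1 < p.1 ∧ st.2 < p.2} :=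
        (measurableSet_lt measurable_const measurable_fst).inter
          (measurableSet_lt measurable_const measurable_snd)
      have hval : π₀ {p : ℝ × ℝ | st.1 < p.1 ∧ st.2 < p.2}
          = min (μ (Ioi st.1)) (ν (Ioi st.2)) := by
        rw [hπ₀def, Measure.map_apply hT hSm]
        have : T ⁻¹' {p : ℝ × ℝ | st.1 < p.1 ∧ st.2 < p.2}
            = {α | st.1 < qm μ α ∧ st.2 < qm ν α} := rfl
        rw [this, comon_surv]
      rw [hval]
      refine le_min ?_ ?_
      · have : π {p : ℝ × ℝ | st.1 < p.1 ∧ st.2 < p.2} ≤ π {p : ℝ × ℝ | st.1 < p.1} :=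
          measure_mono fun p hp => hp.1
        refine this.trans ?_
        have e1 : {p : ℝ × ℝ | st.1 < p.1} = Prod.fst ⁻¹' Ioi st.1 := rfl
        rw [e1, ← Measure.map_apply measurable_fst measurableSet_Ioi, hfst]
      · have : π {p : ℝ × ℝ | st.1 < p.1 ∧ st.2 < p.2} ≤ π {p : ℝ × ℝ | st.2 < p.2} :=
          measure_mono fun p hp => hp.2
        refine this.trans ?_
        have e1 : {p : ℝ × ℝ | st.2 < p.2} = Prod.snd ⁻¹' Ioi st.2 := rfl
        rw [e1, ← Measure.map_apply measurable_snd measurableSet_Ioi, hsnd]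
    have hJ : ∫ p, p.1 * p.2 ∂π₀ ≥ ∫ p, p.1 * p.2 ∂π := by
      rw [hoeffding_eq π imul, hoeffding_eq π₀ imul₀]
      exact integral_mono (hoeffding_integrable π imul) (hoeffding_integrable π₀ imul₀)
        fun st => inner_mono π π₀ hfst hsnd hfst₀ hsnd₀ st (hcomp st)
    rw [← hcostval, hcost₀, hcost]
    linarith
end
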